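/- Let $A, B \in \mathbb{R}^{p\times p}$ be positive semi-definite symmetric matrices and $u \in \mathbb{R}^p$. Then for any positive integer $d$, $u^\top (A-B)^d u \le \|A-B\|_2^{d-1} \left( u^\top A u + 2\|B\|_2 \|u\|^2 \right)$. -/

import Mathlib

open Matrix

/-- The ℓ²→ℓ² operator norm of a real square matrix. -/
noncomputable def matOpNorm {p : ℕ} (M : Matrix (Fin p) (Fin p) ℝ) : ℝ :=
  ‖Matrix.toEuclideanCLM (𝕜 := ℝ) M‖

lemma quad_abs_le {p : ℕ} (M : Matrix (Fin p) (Fin p) ℝ) (x : Fin p → ℝ) :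
    |x ⬝ᵥ M *ᵥ x| ≤ matOpNorm M * ∑ i, x i ^ 2 := by
  set y : EuclideanSpace ℝ (Fin p) := (WithLp.equiv 2 _).symm x with hy
  have h1 : (toEuclideanCLM (𝕜 := ℝ) M) y = (WithLp.equiv 2 _).symm (M *ᵥ x) :=
    Matrix.toEuclideanCLM_toLp M x
  have h2 : x ⬝ᵥ M *ᵥ x = inner ℝ y ((toEuclideanCLM (𝕜 := ℝ) M) y) := by
    rw [h1, EuclideanSpace.inner_eq_star_dotProduct]
    simp [hy, dotProduct, mul_comm]
  have h3 : ‖y‖ ^ 2 = ∑ i, x i ^ 2 := by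
    rw [EuclideanSpace.norm_eq, Real.sq_sqrt (by positivity)]
    simp [hy, sq_abs]
  rw [h2]
  calc |inner ℝ y ((toEuclideanCLM (𝕜 := ℝ) M) y)| ≤ ‖y‖ * ‖(toEuclideanCLM (𝕜 := ℝ) M) y‖ :=
        abs_real_inner_le_norm _ _
    _ ≤ ‖y‖ * (matOpNorm M * ‖y‖) := by
        gcongr; exact (toEuclideanCLM (𝕜 := ℝ) M).le_opNorm y
    _ = matOpNorm M * ∑ i, x i ^ 2 := by rw [← h3]; ring

lemma conj_pow_aux {p : ℕ} (U D : Matrix (Fin p) (Fin p) ℝ) (h1 : star U * U = 1)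
    (h2 : U * star U = 1) (d : ℕ) : (U * D * star U) ^ d = U * D ^ d * star U := by
  induction d with
  | zero => simpa using h2.symm
  | succ n ih =>
      rw [pow_succ, pow_succ, ih]
      calc U * D ^ n * star U * (U * D * star U)
          = U * D ^ n * (star U * U) * D * star U := by noncomm_ring
        _ = U * (D ^ n * D) * star U := by rw [h1]; noncomm_ring

lemma quad_pow_eq {p : ℕ} {M : Matrix (Fin p) (Fin p) ℝ} (hM : M.IsHermitian) (d : ℕ)
    (u : Fin p → ℝ) :
    u ⬝ᵥ (M ^ d) *ᵥ u
      = ∑ i, hM.eigenvalues i ^ d *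
          ((star (hM.eigenvectorUnitary : Matrix (Fin p) (Fin p) ℝ) *ᵥ u) i) ^ 2 := by
  set U : Matrix (Fin p) (Fin p) ℝ := (hM.eigenvectorUnitary : Matrix (Fin p) (Fin p) ℝ) with hU
  have h1 : star U * U = 1 := Unitary.coe_star_mul_self _
  have h2 : U * star U = 1 := Unitary.coe_mul_star_self _
  have hspec : M = U * diagonal hM.eigenvalues * star U := by
    simpa using hM.spectral_theorem
  set w : Fin p → ℝ := star U *ᵥ u with hw
  have key : M ^ d = U * diagonal (fun i => hM.eigenvalues i ^ d) * star U := by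
    conv_lhs => rw [hspec]
    rw [conj_pow_aux U _ h1 h2, Matrix.diagonal_pow]
    rfl
  rw [key]
  rw [← Matrix.mulVec_mulVec, ← Matrix.mulVec_mulVec, Matrix.dotProduct_mulVec u U]
  have : u ᵥ* U = w := by rw [hw, ← Matrix.mulVec_transpose]; rfl
  rw [this]
  simp [Matrix.mulVec_diagonal, dotProduct, sq]
  exact Finset.sum_congr rfl fun j _ => by ring

lemma sum_sq_w {p : ℕ} {M : Matrix (Fin p) (Fin p) ℝ} (hM : M.IsHermitian)
    (u : Fin p → ℝ) :
    ∑ i, ((star (hM.eigenvectorUnitary : Matrix (Fin p) (Fin p) ℝ) *ᵥ u) i) ^ 2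
      = ∑ i, u i ^ 2 := by
  set U : Matrix (Fin p) (Fin p) ℝ := (hM.eigenvectorUnitary : Matrix (Fin p) (Fin p) ℝ) with hU
  have h2 : U * star U = 1 := Unitary.coe_mul_star_self _
  have : (star U *ᵥ u) ⬝ᵥ (star U *ᵥ u) = u ⬝ᵥ u := by
    rw [Matrix.dotProduct_mulVec, ← Matrix.mulVec_transpose]
    have hsUT : (star U)ᵀ = U := by
      ext i j; simp [Matrix.star_eq_conjTranspose, Matrix.conjTranspose_apply]
    rw [hsUT, Matrix.mulVec_mulVec, h2, Matrix.one_mulVec]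
  simpa [dotProduct, sq] using this

lemma eig_abs_le {p : ℕ} {M : Matrix (Fin p) (Fin p) ℝ} (hM : M.IsHermitian) (i : Fin p) :
    |hM.eigenvalues i| ≤ matOpNorm M := by
  set v : Fin p → ℝ := ⇑(hM.eigenvectorBasis i) with hv
  have hnorm : ∑ j, v j ^ 2 = 1 := by
    have h := hM.eigenvectorBasis.orthonormal.1 i
    rw [EuclideanSpace.norm_eq] at h
    have h2 := Real.sqrt_eq_one.mp h
    simpa [hv, sq_abs] using h2
  have hquad : v ⬝ᵥ M *ᵥ v = hM.eigenvalues i := by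
    rw [hv, hM.mulVec_eigenvectorBasis]
    have : ∑ j, (⇑(hM.eigenvectorBasis i) : Fin p → ℝ) j *
        (hM.eigenvalues i • ⇑(hM.eigenvectorBasis i)) j
        = hM.eigenvalues i * ∑ j, (⇑(hM.eigenvectorBasis i) : Fin p → ℝ) j ^ 2 := by
      simp only [Pi.smul_apply, smul_eq_mul, Finset.mul_sum, sq]
      exact Finset.sum_congr rfl fun j _ => by ring
    rw [dotProduct, this, ← hv, hnorm, mul_one]
  have := quad_abs_le M v
  rw [hquad, hnorm, mul_one] at this
  exact this

lemma quad_le_norm {p : ℕ} (M : Matrix (Fin p) (Fin p) ℝ) (x : Fin p → ℝ) :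
    x ⬝ᵥ M *ᵥ x ≤ matOpNorm M * ∑ i, x i ^ 2 :=
  le_trans (le_abs_self _) (quad_abs_le M x)

/-- For psd matrices `A, B` and any vector `u`,
`uᵀ(A-B)^d u ≤ ‖A-B‖₂^{d-1} (uᵀAu + 2‖B‖₂‖u‖²)`. -/
theorem stmt4 (p : ℕ) (A B : Matrix (Fin p) (Fin p) ℝ)
    (hA : A.PosSemidef) (hB : B.PosSemidef) (u : Fin p → ℝ) (d : ℕ) (hd : 0 < d) :
    u ⬝ᵥ ((A - B) ^ d).mulVec u ≤
      (matOpNorm (A - B)) ^ (d - 1) *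
        (u ⬝ᵥ A.mulVec u + 2 * matOpNorm B * (∑ i, (u i) ^ 2)) := by
  set M : Matrix (Fin p) (Fin p) ℝ := A - B with hMdef
  have hM : M.IsHermitian := hA.1.sub hB.1
  set ν : ℝ := matOpNorm M with hν
  set β : ℝ := matOpNorm B with hβ
  have hν0 : 0 ≤ ν := norm_nonneg _
  have hβ0 : 0 ≤ β := norm_nonneg _
  set w : Fin p → ℝ := star (hM.eigenvectorUnitary : Matrix (Fin p) (Fin p) ℝ) *ᵥ u with hw
  set μ : Fin p → ℝ := hM.eigenvalues with hμ
  -- eigenvalue lower bound: μ i ≥ -β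
  have hlow : ∀ i, -β ≤ μ i := by
    intro i
    set v : Fin p → ℝ := ⇑(hM.eigenvectorBasis i) with hv
    have hnorm : ∑ j, v j ^ 2 = 1 := by
      have h := hM.eigenvectorBasis.orthonormal.1 i
      rw [EuclideanSpace.norm_eq] at h
      have h2 := Real.sqrt_eq_one.mp h
      simpa [hv, sq_abs] using h2
    have hquad : v ⬝ᵥ M *ᵥ v = μ i := by
      rw [hv, hM.mulVec_eigenvectorBasis]
      have : ∑ j, (⇑(hM.eigenvectorBasis i) : Fin p → ℝ) j *
          (hM.eigenvalues i • ⇑(hM.eigenvectorBasis i)) j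
          = hM.eigenvalues i * ∑ j, (⇑(hM.eigenvectorBasis i) : Fin p → ℝ) j ^ 2 := by
        simp only [Pi.smul_apply, smul_eq_mul, Finset.mul_sum, sq]
        exact Finset.sum_congr rfl fun j _ => by ring
      rw [dotProduct, this, ← hv, hnorm, mul_one]
    have hsplit : v ⬝ᵥ M *ᵥ v = v ⬝ᵥ A *ᵥ v - v ⬝ᵥ B *ᵥ v := by
      rw [hMdef, Matrix.sub_mulVec, dotProduct_sub]
    have hAv : 0 ≤ v ⬝ᵥ A *ᵥ v := by simpa using hA.dotProduct_mulVec_nonneg v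
    have hBv : v ⬝ᵥ B *ᵥ v ≤ β := by
      have := quad_le_norm B v
      rwa [hnorm, mul_one] at this
    have := hquad.symm.trans hsplit
    linarith
  have habs : ∀ i, |μ i| ≤ ν := fun i => eig_abs_le hM i
  -- pointwise inequality
  have hpt : ∀ i, μ i ^ d * w i ^ 2 ≤ ν ^ (d - 1) * (μ i + 2 * β) * w i ^ 2 := by
    intro i
    have hw2 : (0:ℝ) ≤ w i ^ 2 := sq_nonneg _
    have habs' : |μ i| ≤ μ i + 2 * β := by
      rcases abs_cases (μ i) with ⟨h, _⟩ | ⟨h, _⟩ <;> [linarith; (have := hlow i; linarith)]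
    have h1 : μ i ^ d ≤ |μ i| ^ d := by
      rw [← abs_pow]; exact le_abs_self _
    have h2 : |μ i| ^ d = |μ i| ^ (d - 1) * |μ i| := by
      conv_lhs => rw [show d = (d - 1) + 1 from (Nat.succ_pred_eq_of_pos hd).symm]
      rw [pow_succ]
    have h3 : |μ i| ^ (d - 1) * |μ i| ≤ ν ^ (d - 1) * (μ i + 2 * β) :=
      mul_le_mul (pow_le_pow_left₀ (abs_nonneg _) (habs i) _) habs' (abs_nonneg _)
        (pow_nonneg hν0 _)
    have : μ i ^ d ≤ ν ^ (d - 1) * (μ i + 2 * β) := by rw [h2] at h1; linarith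
    exact mul_le_mul_of_nonneg_right this hw2
  -- assemble
  have hquadM : u ⬝ᵥ M *ᵥ u ≤ u ⬝ᵥ A *ᵥ u := by
    have hBu : 0 ≤ u ⬝ᵥ B *ᵥ u := by simpa using hB.dotProduct_mulVec_nonneg u
    rw [hMdef, Matrix.sub_mulVec, dotProduct_sub]
    linarith
  calc u ⬝ᵥ (M ^ d) *ᵥ u = ∑ i, μ i ^ d * w i ^ 2 := quad_pow_eq hM d u
    _ ≤ ∑ i, ν ^ (d - 1) * (μ i + 2 * β) * w i ^ 2 := Finset.sum_le_sum fun i _ => hpt i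
    _ = ν ^ (d - 1) * ((∑ i, μ i * w i ^ 2) + 2 * β * ∑ i, w i ^ 2) := by
        rw [Finset.mul_sum, mul_add, Finset.mul_sum, Finset.mul_sum, ← Finset.sum_add_distrib]
        exact Finset.sum_congr rfl fun i _ => by ring
    _ = ν ^ (d - 1) * ((u ⬝ᵥ M *ᵥ u) + 2 * β * ∑ i, u i ^ 2) := by
        have e1 : ∑ i, μ i * w i ^ 2 = u ⬝ᵥ M *ᵥ u := by
          have := quad_pow_eq hM 1 u
          simpa [pow_one] using this.symm
        rw [e1, sum_sq_w hM u]
    _ ≤ ν ^ (d - 1) * ((u ⬝ᵥ A *ᵥ u) + 2 * β * ∑ i, u i ^ 2) := by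
        apply mul_le_mul_of_nonneg_left _ (pow_nonneg hν0 _)
        linarith
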